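/- arXiv:2411.13736 — 8 statements merged into one kernel-verified Lean document; each statement's English description precedes it below -/
import Mathlib

section
/- Let α > −1, β > −1−α, b ≠ 0 be real. The operator D with F₂(t) = tI, F₁(t) = [[α+1+β−t, 0],[−b(β−2)t, α+1−t]], F₀ = [[−1, 0],[b(α+1), 0]], and the weight W(t) = e^{−t} t^α [[t^β+b²t², bt],[bt, 1]] satisfy the three symmetry equations on (0,∞): F₂* W = W F₂, 2(W F₂)' = W F₁ + F₁* W, and (W F₂)'' = (W F₁)' − W F₀ + F₀* W. -/
noncomputable def gfun (γ : ℝ) : ℝ → ℝ := fun s => Real.exp (-s) * s ^ γ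
noncomputable def dg (γ : ℝ) : ℝ → ℝ := fun s => γ * gfun (γ - 1) s - gfun γ s

lemma gfun_hasDeriv (γ : ℝ) {t : ℝ} (ht : 0 < t) :
    HasDerivAt (gfun γ) (dg γ t) t := by
  have h1 : HasDerivAt (fun s : ℝ => Real.exp (-s)) (-Real.exp (-t)) t := by
    simpa [Function.comp_def] using (Real.hasDerivAt_exp (-t)).comp t (hasDerivAt_neg t)
  have h2 : HasDerivAt (fun s : ℝ => s ^ γ) (γ * t ^ (γ - 1)) t :=
    Real.hasDerivAt_rpow_const (Or.inl ht.ne')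
  have h3 := h1.mul h2
  have hval : dg γ t = -Real.exp (-t) * t ^ γ + Real.exp (-t) * (γ * t ^ (γ - 1)) := by
    simp [dg, gfun]; ring
  rw [hval]; exact h3

lemma dg_hasDeriv (γ : ℝ) {t : ℝ} (ht : 0 < t) :
    HasDerivAt (dg γ) (γ * dg (γ - 1) t - dg γ t) t :=
  ((gfun_hasDeriv (γ - 1) ht).const_mul γ).sub (gfun_hasDeriv γ ht)

lemma deriv_congr_Ioi {f h : ℝ → ℝ} {t : ℝ} (ht : 0 < t)
    (hfh : ∀ s ∈ Set.Ioi (0 : ℝ), f s = h s) : deriv f t = deriv h t :=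
  Filter.EventuallyEq.deriv_eq (Filter.eventuallyEq_of_mem (isOpen_Ioi.mem_nhds ht) hfh)

lemma rpow_three {s : ℝ} : s ^ (3 : ℝ) = s ^ 3 := by
  rw [show (3:ℝ) = ((3:ℕ):ℝ) by norm_num, Real.rpow_natCast]

lemma rpow_two' {s : ℝ} : s ^ (2 : ℝ) = s ^ 2 := by
  rw [show (2:ℝ) = ((2:ℕ):ℝ) by norm_num, Real.rpow_natCast]

open Matrix

/-- the operator of the first Laguerre family is `W`-symmetric:
the three symmetry equations hold on `(0, ∞)` (derivatives entrywise). -/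
theorem first_family_symmetry_equations (α β b : ℝ)
    (hα : -1 < α) (hβ : -1 - α < β) (hb : b ≠ 0)
    (W F₁ F₂ : ℝ → Matrix (Fin 2) (Fin 2) ℝ) (F₀ : Matrix (Fin 2) (Fin 2) ℝ)
    (hW : ∀ t : ℝ, W t = Real.exp (-t) • (t ^ α) •
      !![t ^ β + b ^ 2 * t ^ 2, b * t; b * t, 1])
    (hF₂ : ∀ t : ℝ, F₂ t = t • (1 : Matrix (Fin 2) (Fin 2) ℝ))
    (hF₁ : ∀ t : ℝ, F₁ t = !![α + 1 + β - t, 0; -b * (β - 2) * t, α + 1 - t])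
    (hF₀ : F₀ = !![-1, 0; b * (α + 1), 0]) :
    ∀ t ∈ Set.Ioi (0 : ℝ),
      ((F₂ t)ᵀ * W t = W t * F₂ t) ∧
      (∀ i j : Fin 2,
        2 * deriv (fun s => (W s * F₂ s) i j) t = (W t * F₁ t + (F₁ t)ᵀ * W t) i j) ∧
      (∀ i j : Fin 2,
        deriv (deriv (fun s => (W s * F₂ s) i j)) t =
          deriv (fun s => (W s * F₁ s) i j) t - (W t * F₀) i j + (F₀ᵀ * W t) i j) := by
  intro t ht
  have ht' : (0:ℝ) < t := ht
  have htne : t ≠ 0 := ht'.ne'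
  -- entry descriptions of W * F₂ on (0,∞)
  have e00 : ∀ s ∈ Set.Ioi (0:ℝ), (fun s => (W s * F₂ s) 0 0) s
      = gfun (α+β+1) s + b^2 * gfun (α+3) s := by
    intro s hs
    have hs' : (0:ℝ) < s := hs
    simp [hW, hF₂, Matrix.mul_smul, gfun]
    simp only [Real.rpow_add hs', Real.rpow_one, rpow_three, rpow_two']
    ring
  have e01 : ∀ s ∈ Set.Ioi (0:ℝ), (fun s => (W s * F₂ s) 0 1) s
      = b * gfun (α+2) s := by
    intro s hs
    have hs' : (0:ℝ) < s := hs
    simp [hW, hF₂, Matrix.mul_smul, gfun]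
    simp only [Real.rpow_add hs', Real.rpow_one, rpow_three, rpow_two']
    ring
  have e10 : ∀ s ∈ Set.Ioi (0:ℝ), (fun s => (W s * F₂ s) 1 0) s
      = b * gfun (α+2) s := by
    intro s hs
    have hs' : (0:ℝ) < s := hs
    simp [hW, hF₂, Matrix.mul_smul, gfun]
    simp only [Real.rpow_add hs', Real.rpow_one, rpow_three, rpow_two']
    ring
  have e11 : ∀ s ∈ Set.Ioi (0:ℝ), (fun s => (W s * F₂ s) 1 1) s
      = gfun (α+1) s := by
    intro s hs
    have hs' : (0:ℝ) < s := hs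
    simp [hW, hF₂, Matrix.mul_smul, gfun]
    simp only [Real.rpow_add hs', Real.rpow_one, rpow_three, rpow_two']
    ring
  -- entry descriptions of W * F₁ on (0,∞)
  have m00 : ∀ s ∈ Set.Ioi (0:ℝ), (fun s => (W s * F₁ s) 0 0) s
      = (α+1+β) * gfun (α+β) s - gfun (α+β+1) s + b^2*(α+1+β) * gfun (α+2) s
        - b^2 * gfun (α+3) s - b^2*(β-2) * gfun (α+2) s := by
    intro s hs
    have hs' : (0:ℝ) < s := hs
    simp [hW, hF₁, Matrix.mul_apply, Fin.sum_univ_two, gfun]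
    simp only [Real.rpow_add hs', Real.rpow_one, rpow_three, rpow_two']
    ring
  have m01 : ∀ s ∈ Set.Ioi (0:ℝ), (fun s => (W s * F₁ s) 0 1) s
      = b*(α+1) * gfun (α+1) s - b * gfun (α+2) s := by
    intro s hs
    have hs' : (0:ℝ) < s := hs
    simp [hW, hF₁, Matrix.mul_apply, Fin.sum_univ_two, gfun]
    simp only [Real.rpow_add hs', Real.rpow_one, rpow_three, rpow_two']
    ring
  have m10 : ∀ s ∈ Set.Ioi (0:ℝ), (fun s => (W s * F₁ s) 1 0) s
      = b*(α+1+β) * gfun (α+1) s - b * gfun (α+2) s - b*(β-2) * gfun (α+1) s := by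
    intro s hs
    have hs' : (0:ℝ) < s := hs
    simp [hW, hF₁, Matrix.mul_apply, Fin.sum_univ_two, gfun]
    simp only [Real.rpow_add hs', Real.rpow_one, rpow_three, rpow_two']
    ring
  have m11 : ∀ s ∈ Set.Ioi (0:ℝ), (fun s => (W s * F₁ s) 1 1) s
      = (α+1) * gfun α s - gfun (α+1) s := by
    intro s hs
    have hs' : (0:ℝ) < s := hs
    simp [hW, hF₁, Matrix.mul_apply, Fin.sum_univ_two, gfun]
    simp only [Real.rpow_add hs', Real.rpow_one, rpow_three, rpow_two']
    ring
  have hT1 : (!![α + 1 + β - t, 0; -b * (β - 2) * t, α + 1 - t])ᵀ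
      = !![α + 1 + β - t, -b * (β - 2) * t; 0, α + 1 - t] := by
    ext i j; fin_cases i <;> fin_cases j <;> simp
  have hT0 : (!![(-1 : ℝ), 0; b * (α + 1), 0])ᵀ = !![(-1 : ℝ), b * (α + 1); 0, 0] := by
    ext i j; fin_cases i <;> fin_cases j <;> simp
  refine ⟨?_, ?_, ?_⟩
  · simp [hF₂, Matrix.smul_mul, Matrix.mul_smul]
  · -- second symmetry equation
    intro i j
    fin_cases i <;> fin_cases j <;>
      simp only [Fin.zero_eta, Fin.mk_one, Fin.isValue]
    · erw [deriv_congr_Ioi ht' e00,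
        ((gfun_hasDeriv (α+β+1) ht').add ((gfun_hasDeriv (α+3) ht').const_mul (b^2))).deriv]
      simp [hW, hF₁, hT1, Matrix.mul_apply, Matrix.transpose_apply, Matrix.vecHead, Matrix.vecTail, Fin.sum_univ_two, dg, gfun]
      try simp only [Real.rpow_add ht', Real.rpow_sub ht', Real.rpow_one, rpow_three, rpow_two']
      try field_simp
      try ring
    · rw [deriv_congr_Ioi ht' e01,
        ((gfun_hasDeriv (α+2) ht').const_mul b).deriv]
      simp [hW, hF₁, hT1, Matrix.mul_apply, Matrix.transpose_apply, Matrix.vecHead, Matrix.vecTail, Fin.sum_univ_two, dg, gfun]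
      try simp only [Real.rpow_add ht', Real.rpow_sub ht', Real.rpow_one, rpow_three, rpow_two']
      try field_simp
      try ring
    · rw [deriv_congr_Ioi ht' e10,
        ((gfun_hasDeriv (α+2) ht').const_mul b).deriv]
      simp [hW, hF₁, hT1, Matrix.mul_apply, Matrix.transpose_apply, Matrix.vecHead, Matrix.vecTail, Fin.sum_univ_two, dg, gfun]
      try simp only [Real.rpow_add ht', Real.rpow_sub ht', Real.rpow_one, rpow_three, rpow_two']
      try field_simp
      try ring
    · rw [deriv_congr_Ioi ht' e11, (gfun_hasDeriv (α+1) ht').deriv]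
      simp [hW, hF₁, hT1, Matrix.mul_apply, Matrix.transpose_apply, Matrix.vecHead, Matrix.vecTail, Fin.sum_univ_two, dg, gfun]
      try simp only [Real.rpow_add ht', Real.rpow_sub ht', Real.rpow_one, rpow_three, rpow_two']
      try field_simp
      try ring
  · -- third symmetry equation
    intro i j
    fin_cases i <;> fin_cases j <;>
      simp only [Fin.zero_eta, Fin.mk_one, Fin.isValue]
    · have hd : ∀ s ∈ Set.Ioi (0:ℝ), deriv (fun s => (W s * F₂ s) 0 0) s
          = dg (α+β+1) s + b^2 * dg (α+3) s := by
        intro s hs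
        have hs' : (0:ℝ) < s := hs
        erw [deriv_congr_Ioi hs' e00,
          ((gfun_hasDeriv (α+β+1) hs').add ((gfun_hasDeriv (α+3) hs').const_mul (b^2))).deriv]
      erw [deriv_congr_Ioi ht' hd,
        ((dg_hasDeriv (α+β+1) ht').add ((dg_hasDeriv (α+3) ht').const_mul (b^2))).deriv,
        deriv_congr_Ioi ht' m00,
        ((((((gfun_hasDeriv (α+β) ht').const_mul (α+1+β)).sub
            (gfun_hasDeriv (α+β+1) ht')).add
            ((gfun_hasDeriv (α+2) ht').const_mul (b^2*(α+1+β)))).sub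
            ((gfun_hasDeriv (α+3) ht').const_mul (b^2))).sub
            ((gfun_hasDeriv (α+2) ht').const_mul (b^2*(β-2)))).deriv]
      simp [hW, hF₀, hT0, Matrix.mul_apply, Matrix.transpose_apply, Matrix.vecHead, Matrix.vecTail, Fin.sum_univ_two, dg, gfun]
      try simp only [Real.rpow_add ht', Real.rpow_sub ht', Real.rpow_one, rpow_three, rpow_two']
      try field_simp
      try ring
    · have hd : ∀ s ∈ Set.Ioi (0:ℝ), deriv (fun s => (W s * F₂ s) 0 1) s
          = b * dg (α+2) s := by
        intro s hs
        have hs' : (0:ℝ) < s := hs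
        rw [deriv_congr_Ioi hs' e01, ((gfun_hasDeriv (α+2) hs').const_mul b).deriv]
      erw [deriv_congr_Ioi ht' hd,
        ((dg_hasDeriv (α+2) ht').const_mul b).deriv,
        deriv_congr_Ioi ht' m01,
        (((gfun_hasDeriv (α+1) ht').const_mul (b*(α+1))).sub
          ((gfun_hasDeriv (α+2) ht').const_mul b)).deriv]
      simp [hW, hF₀, hT0, Matrix.mul_apply, Matrix.transpose_apply, Matrix.vecHead, Matrix.vecTail, Fin.sum_univ_two, dg, gfun]
      try simp only [Real.rpow_add ht', Real.rpow_sub ht', Real.rpow_one, rpow_three, rpow_two']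
      try field_simp
      try ring
    · have hd : ∀ s ∈ Set.Ioi (0:ℝ), deriv (fun s => (W s * F₂ s) 1 0) s
          = b * dg (α+2) s := by
        intro s hs
        have hs' : (0:ℝ) < s := hs
        rw [deriv_congr_Ioi hs' e10, ((gfun_hasDeriv (α+2) hs').const_mul b).deriv]
      erw [deriv_congr_Ioi ht' hd,
        ((dg_hasDeriv (α+2) ht').const_mul b).deriv,
        deriv_congr_Ioi ht' m10,
        ((((gfun_hasDeriv (α+1) ht').const_mul (b*(α+1+β))).sub
          ((gfun_hasDeriv (α+2) ht').const_mul b)).sub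
          ((gfun_hasDeriv (α+1) ht').const_mul (b*(β-2)))).deriv]
      simp [hW, hF₀, hT0, Matrix.mul_apply, Matrix.transpose_apply, Matrix.vecHead, Matrix.vecTail, Fin.sum_univ_two, dg, gfun]
      try simp only [Real.rpow_add ht', Real.rpow_sub ht', Real.rpow_one, rpow_three, rpow_two']
      try field_simp
      try ring
    · have hd : ∀ s ∈ Set.Ioi (0:ℝ), deriv (fun s => (W s * F₂ s) 1 1) s
          = dg (α+1) s := by
        intro s hs
        have hs' : (0:ℝ) < s := hs
        rw [deriv_congr_Ioi hs' e11, (gfun_hasDeriv (α+1) hs').deriv]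
      erw [deriv_congr_Ioi ht' hd,
        (dg_hasDeriv (α+1) ht').deriv,
        deriv_congr_Ioi ht' m11,
        (((gfun_hasDeriv α ht').const_mul (α+1)).sub (gfun_hasDeriv (α+1) ht')).deriv]
      simp [hW, hF₀, hT0, Matrix.mul_apply, Matrix.transpose_apply, Matrix.vecHead, Matrix.vecTail, Fin.sum_univ_two, dg, gfun]
      try simp only [Real.rpow_add ht', Real.rpow_sub ht', Real.rpow_one, rpow_three, rpow_two']
      try field_simp
      try ring
end

section
/- Let α > −1, β > −1−α, b ≠ 0 and W(t) = e^{−t} t^α [[t^β+b²t², bt],[bt, 1]]. If V₀ is a 2×2 complex matrix with W(t) V₀ = V₀* W(t) for all t ∈ (0,∞), then V₀ is a scalar multiple of the identity. -/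
open Matrix

private lemma two_rpow_inj {x y : ℝ} (h : (2:ℝ) ^ x = (2:ℝ) ^ y) : x = y :=
  le_antisymm ((Real.rpow_le_rpow_left_iff one_lt_two).1 h.le)
    ((Real.rpow_le_rpow_left_iff one_lt_two).1 h.ge)

private lemma key_poly (b β : ℝ) (hb : b ≠ 0) (w y z : ℂ)
    (h : ∀ t : ℝ, 0 < t →
      ((t ^ β : ℝ) : ℂ) * w + (b:ℂ)^2 * (t:ℂ)^2 * w + (t:ℂ) * y + z = 0) :
    w = 0 ∧ y = 0 ∧ z = 0 := by
  have hbC : (b:ℂ) ≠ 0 := by exact_mod_cast hb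
  by_cases hβ0 : β = 0
  · subst hβ0
    simp only [Real.rpow_zero, Complex.ofReal_one, one_mul] at h
    have e1 := h 1 one_pos
    have e2 := h 2 two_pos
    have e3 := h 3 (by norm_num)
    push_cast at e1 e2 e3
    have hbw : (b:ℂ)^2 * w = 0 := by linear_combination (e1 - 2*e2 + e3)/2
    have hw : w = 0 := by
      rcases mul_eq_zero.1 hbw with h' | h'
      · exact absurd h' (pow_ne_zero 2 hbC)
      · exact h'
    have hy : y = 0 := by linear_combination e2 - e1 - 3*(b:ℂ)^2*hw
    exact ⟨hw, hy, by linear_combination e1 - hw - (b:ℂ)^2*hw - hy⟩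
  · by_cases hβ1 : β = 1
    · subst hβ1
      simp only [Real.rpow_one] at h
      have e1 := h 1 one_pos
      have e2 := h 2 two_pos
      have e3 := h 3 (by norm_num)
      push_cast at e1 e2 e3
      have hbw : (b:ℂ)^2 * w = 0 := by linear_combination (e1 - 2*e2 + e3)/2
      have hw : w = 0 := by
        rcases mul_eq_zero.1 hbw with h' | h'
        · exact absurd h' (pow_ne_zero 2 hbC)
        · exact h'
      have hy : y = 0 := by linear_combination e2 - e1 - 3*(b:ℂ)^2*hw - hw
      exact ⟨hw, hy, by linear_combination e1 - (b:ℂ)^2*hw - hw - hy⟩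
    · by_cases hβ2 : β = 2
      · subst hβ2
        have h' : ∀ t : ℝ, 0 < t →
            (t:ℂ)^2 * w + (b:ℂ)^2 * (t:ℂ)^2 * w + (t:ℂ) * y + z = 0 := by
          intro t ht
          have h0 := h t ht
          rw [show (2:ℝ) = ((2:ℕ):ℝ) by norm_num, Real.rpow_natCast] at h0
          push_cast at h0
          linear_combination h0
        have e1 := h' 1 one_pos
        have e2 := h' 2 two_pos
        have e3 := h' 3 (by norm_num)
        push_cast at e1 e2 e3
        have hbw : (1 + (b:ℂ)^2) * w = 0 := by linear_combination (e1 - 2*e2 + e3)/2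
        have hb1 : (1 + (b:ℂ)^2) ≠ 0 := by
          intro hc
          have h0 : (1 + b^2 : ℝ) = 0 := by exact_mod_cast hc
          nlinarith [sq_nonneg b]
        have hw : w = 0 := by
          rcases mul_eq_zero.1 hbw with h' | h'
          · exact absurd h' hb1
          · exact h'
        have hy : y = 0 := by linear_combination e2 - e1 - 3*(1 + (b:ℂ)^2)*hw
        exact ⟨hw, hy, by linear_combination e1 - (1 + (b:ℂ)^2)*hw - hy⟩
      · -- generic case
        set κ : ℝ := (2:ℝ) ^ β with hκdef
        have hκ1 : κ ≠ 1 := fun hc => hβ0 (two_rpow_inj (by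
          rw [← hκdef, hc, Real.rpow_zero]))
        have hκ2 : κ ≠ 2 := fun hc => hβ1 (two_rpow_inj (by
          rw [← hκdef, hc, Real.rpow_one]))
        have hκ4 : κ ≠ 4 := fun hc => hβ2 (two_rpow_inj (by
          rw [← hκdef, hc, show (2:ℝ) = ((2:ℕ):ℝ) by norm_num, Real.rpow_natCast]
          norm_num))
        have hψ : ∀ t : ℝ, 0 < t →
            ((t ^ β : ℝ) : ℂ) * w * ((κ:ℝ):ℂ) - 4 * (((t ^ β : ℝ) : ℂ) * w)
              - 2*(t:ℂ)*y - 3*z = 0 := by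
          intro t ht
          have h1 := h t ht
          have h2 := h (2*t) (by positivity)
          rw [Real.mul_rpow (by norm_num) ht.le] at h2
          push_cast at h1 h2
          linear_combination h2 - 4*h1
        have hχ : ∀ t : ℝ, 0 < t →
            ((t ^ β : ℝ) : ℂ) * w * (((κ:ℝ):ℂ) - 4) * (((κ:ℝ):ℂ) - 2) + 3*z = 0 := by
          intro t ht
          have h1 := hψ t ht
          have h2 := hψ (2*t) (by positivity)
          rw [Real.mul_rpow (by norm_num) ht.le] at h2
          push_cast at h1 h2
          linear_combination h2 - 2*h1
        have c1 := hχ 1 one_pos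
        have c2 := hχ 2 two_pos
        have a1 := hψ 1 one_pos
        simp only [Real.one_rpow, Complex.ofReal_one, one_mul] at c1 c2 a1
        have hprod : (((κ:ℝ):ℂ) - 1) * ((((κ:ℝ):ℂ) - 4) * ((((κ:ℝ):ℂ) - 2) * w)) = 0 := by
          linear_combination c2 - c1
        have hκ1C : ((κ:ℝ):ℂ) - 1 ≠ 0 := sub_ne_zero.2 (by exact_mod_cast hκ1)
        have hκ2C : ((κ:ℝ):ℂ) - 2 ≠ 0 := sub_ne_zero.2 (by exact_mod_cast hκ2)
        have hκ4C : ((κ:ℝ):ℂ) - 4 ≠ 0 := sub_ne_zero.2 (by exact_mod_cast hκ4)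
        have hw : w = 0 := by
          rcases mul_eq_zero.1 hprod with h' | h'
          · exact absurd h' hκ1C
          rcases mul_eq_zero.1 h' with h' | h'
          · exact absurd h' hκ4C
          rcases mul_eq_zero.1 h' with h' | h'
          · exact absurd h' hκ2C
          · exact h'
        have hz : z = 0 := by
          linear_combination c1/3 - ((((κ:ℝ):ℂ) - 4) * (((κ:ℝ):ℂ) - 2))/3 * hw
        have hy : y = 0 := by
          linear_combination -a1/2 + (((κ:ℝ):ℂ) - 4)/2*hw - 3/2*hz
        exact ⟨hw, hy, hz⟩

/-- irreducibility of the first-family weight: any complex matrix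
`V₀` with `W(t) V₀ = V₀* W(t)` for all `t > 0` is scalar. -/
theorem first_family_weight_irreducible (α β b : ℝ)
    (hα : -1 < α) (hβ : -1 - α < β) (hb : b ≠ 0)
    (W : ℝ → Matrix (Fin 2) (Fin 2) ℂ)
    (hW : ∀ t : ℝ, W t =
      !![((Real.exp (-t) * t ^ α * (t ^ β + b ^ 2 * t ^ 2) : ℝ) : ℂ),
         ((Real.exp (-t) * t ^ α * (b * t) : ℝ) : ℂ);
         ((Real.exp (-t) * t ^ α * (b * t) : ℝ) : ℂ),
         ((Real.exp (-t) * t ^ α : ℝ) : ℂ)])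
    (V₀ : Matrix (Fin 2) (Fin 2) ℂ)
    (hV : ∀ t ∈ Set.Ioi (0 : ℝ), W t * V₀ = V₀ᴴ * W t) :
    ∃ c : ℂ, V₀ = c • (1 : Matrix (Fin 2) (Fin 2) ℂ) := by
  have hbC : (b:ℂ) ≠ 0 := by exact_mod_cast hb
  set p := V₀ 0 0 with hp_def
  set q := V₀ 0 1 with hq_def
  set r := V₀ 1 0 with hr_def
  set s := V₀ 1 1 with hs_def
  have hc : ∀ t : ℝ, 0 < t →
      (Complex.exp (-(t:ℂ)) * Complex.ofReal (t ^ α)) ≠ 0 := by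
    intro t ht
    have h2 : t ^ α ≠ 0 := (Real.rpow_pos_of_pos ht α).ne'
    exact mul_ne_zero (Complex.exp_ne_zero _) (by simpa [Complex.ofReal_ne_zero] using h2)
  -- extract stripped entry equations
  have entries : ∀ t : ℝ, 0 < t →
      (((t ^ β : ℝ):ℂ) + (b:ℂ)^2*(t:ℂ)^2) * p + (b:ℂ)*(t:ℂ) * r
        = (((t ^ β : ℝ):ℂ) + (b:ℂ)^2*(t:ℂ)^2) * star p + (b:ℂ)*(t:ℂ) * star r ∧
      (((t ^ β : ℝ):ℂ) + (b:ℂ)^2*(t:ℂ)^2) * q + (b:ℂ)*(t:ℂ) * s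
        = (b:ℂ)*(t:ℂ) * star p + star r ∧
      (b:ℂ)*(t:ℂ) * q + s = (b:ℂ)*(t:ℂ) * star q + star s := by
    intro t ht
    have E := hV t ht
    rw [hW] at E
    have E00 := congrFun (congrFun E 0) 0
    have E01 := congrFun (congrFun E 0) 1
    have E11 := congrFun (congrFun E 1) 1
    simp only [Matrix.mul_apply, Fin.sum_univ_two, Matrix.conjTranspose_apply,
      Matrix.of_apply, Matrix.cons_val', Matrix.cons_val_zero, Matrix.cons_val_one,
      Matrix.head_cons, Matrix.empty_val', Matrix.cons_val_fin_one,
      Matrix.head_fin_const] at E00 E01 E11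
    simp only [← hp_def, ← hq_def, ← hr_def, ← hs_def] at E00 E01 E11
    push_cast at E00 E01 E11
    refine ⟨?_, ?_, ?_⟩
    · refine mul_left_cancel₀ (hc t ht) ?_
      linear_combination E00
    · refine mul_left_cancel₀ (hc t ht) ?_
      linear_combination E01
    · refine mul_left_cancel₀ (hc t ht) ?_
      linear_combination E11
  -- q, s are real
  have f1 := (entries 1 one_pos).2.2
  have f2 := (entries 2 two_pos).2.2
  push_cast at f1 f2
  have hqq : star q = q := by
    have hbq : (b:ℂ) * (star q - q) = 0 := by linear_combination f1 - f2
    rcases mul_eq_zero.1 hbq with h' | h'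
    · exact absurd h' hbC
    · linear_combination h'
  have hss : star s = s := by linear_combination -f1 - (b:ℂ)*hqq
  -- p, r are real, via the key polynomial lemma
  have h1 : ∀ t : ℝ, 0 < t →
      ((t ^ β : ℝ):ℂ) * (p - star p) + (b:ℂ)^2*(t:ℂ)^2*(p - star p)
        + (t:ℂ)*((b:ℂ)*(r - star r)) + 0 = 0 := by
    intro t ht
    linear_combination (entries t ht).1
  obtain ⟨hw1, hy1, -⟩ := key_poly b β hb _ _ _ h1
  have hpp : star p = p := by linear_combination -hw1
  have hrr : star r = r := by
    rcases mul_eq_zero.1 hy1 with h' | h'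
    · exact absurd h' hbC
    · linear_combination -h'
  -- off-diagonal vanishing and diagonal equality
  have h2 : ∀ t : ℝ, 0 < t →
      ((t ^ β : ℝ):ℂ) * q + (b:ℂ)^2*(t:ℂ)^2*q + (t:ℂ)*((b:ℂ)*(s - p)) + (-r) = 0 := by
    intro t ht
    linear_combination (entries t ht).2.1 + (b:ℂ)*(t:ℂ)*hpp + hrr
  obtain ⟨hq0, hy2, hz2⟩ := key_poly b β hb _ _ _ h2
  have hr0 : r = 0 := by linear_combination -hz2
  have hsp : s = p := by
    rcases mul_eq_zero.1 hy2 with h' | h'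
    · exact absurd h' hbC
    · linear_combination h'
  refine ⟨p, ?_⟩
  ext i j
  fin_cases i <;> fin_cases j <;>
    simp [Matrix.one_apply, ← hp_def, ← hq_def, ← hr_def, ← hs_def, hq0, hr0, hsp]
end

section
/- For α > −1 and 0 < |b| < 1 (b real), the matrix W(t) = e^{−t} t^α [[t⁴ + 4b²(α+2)t²(α+2−t), −bt(t−2(α+2))],[−bt(t−2(α+2)), 1]] is positive definite for all t ∈ (0,∞). -/
/-- the weight of the second Laguerre family is positive definite
on `(0, ∞)`: its (2,2) entry and its determinant are positive. -/
theorem second_family_weight_posdef (α b : ℝ)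
    (hα : -1 < α) (hb : 0 < |b|) (hb1 : |b| < 1)
    (W : ℝ → Matrix (Fin 2) (Fin 2) ℝ)
    (hW : ∀ t : ℝ, W t = Real.exp (-t) • (t ^ α) •
      !![t ^ 4 + 4 * b ^ 2 * (α + 2) * t ^ 2 * (α + 2 - t), -b * t * (t - 2 * (α + 2));
         -b * t * (t - 2 * (α + 2)), 1]) :
    ∀ t ∈ Set.Ioi (0 : ℝ), 0 < W t 1 1 ∧ 0 < (W t).det := by
  intro t ht
  have ht0 : (0 : ℝ) < t := ht
  have hrp : 0 < t ^ α := Real.rpow_pos_of_pos ht0 α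
  have hexp : 0 < Real.exp (-t) := Real.exp_pos _
  have hb2 : b ^ 2 < 1 := by
    have := abs_nonneg b
    nlinarith [sq_abs b]
  rw [hW]
  constructor
  · simp [Matrix.smul_apply]
    positivity
  · rw [Matrix.det_smul, Matrix.det_smul, Matrix.det_fin_two_of]
    have key : (t ^ 4 + 4 * b ^ 2 * (α + 2) * t ^ 2 * (α + 2 - t)) * 1 -
        (-b * t * (t - 2 * (α + 2))) * (-b * t * (t - 2 * (α + 2))) = (1 - b ^ 2) * t ^ 4 := by
      ring
    rw [key]
    have : Fintype.card (Fin 2) = 2 := rfl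
    rw [this]
    have h1 : 0 < 1 - b ^ 2 := by linarith
    have h4 : 0 < t ^ 4 := by positivity
    exact mul_pos (by positivity) (mul_pos (by positivity) (mul_pos h1 h4))
end

section
/- Let α > −1, 0 < |b| < 1. The pair D = tI∂² + [[α+5−t, 0],[−4b(α+2)t, α+1−t]]∂ − [[2,0],[−2b(α+2)(α+1),0]] and W(t) = e^{−t} t^α [[t⁴+4b²(α+2)t²(α+2−t), −bt(t−2(α+2))],[−bt(t−2(α+2)), 1]] satisfy the symmetry equations 2(WF₂)' = WF₁ + F₁ᵀW and (WF₂)'' = (WF₁)' − WF₀ + F₀ᵀW on (0,∞), where F₂(t)=tI, F₁(t)=[[α+5−t,0],[−4b(α+2)t, α+1−t]], F₀=[[−2,0],[2b(α+2)(α+1),0]]. -/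
open Matrix

private lemma P5 (c0 c1 c2 c3 c4 c5 s : ℝ) :
    HasDerivAt (fun x : ℝ => c0 + c1*x + c2*x^2 + c3*x^3 + c4*x^4 + c5*x^5)
      (c1 + 2*c2*s + 3*c3*s^2 + 4*c4*s^3 + 5*c5*s^4) s := by
  have h := (((((hasDerivAt_const s c0).add ((hasDerivAt_id s).const_mul c1)).add
      ((hasDerivAt_pow 2 s).const_mul c2)).add ((hasDerivAt_pow 3 s).const_mul c3)).add
      ((hasDerivAt_pow 4 s).const_mul c4)).add ((hasDerivAt_pow 5 s).const_mul c5)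
  refine h.congr_deriv ?_
  push_cast
  ring

private lemma P4 (c0 c1 c2 c3 c4 s : ℝ) :
    HasDerivAt (fun x : ℝ => c0 + c1*x + c2*x^2 + c3*x^3 + c4*x^4)
      (c1 + 2*c2*s + 3*c3*s^2 + 4*c4*s^3) s := by
  have h := ((((hasDerivAt_const s c0).add ((hasDerivAt_id s).const_mul c1)).add
      ((hasDerivAt_pow 2 s).const_mul c2)).add ((hasDerivAt_pow 3 s).const_mul c3)).add
      ((hasDerivAt_pow 4 s).const_mul c4)
  refine h.congr_deriv ?_
  push_cast
  ring

private lemma key (α : ℝ) {t : ℝ} (ht : 0 < t) (p p' : ℝ → ℝ)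
    (hp : ∀ s, HasDerivAt p (p' s) s) :
    HasDerivAt (fun s => Real.exp (-s) * s ^ α * p s)
      (Real.exp (-t) * t ^ (α - 1) * ((α - t) * p t + t * p' t)) t := by
  have h1 : HasDerivAt (fun s : ℝ => Real.exp (-s)) (-Real.exp (-t)) t := by
    have := (Real.hasDerivAt_exp (-t)).comp t (hasDerivAt_neg t)
    exact this.congr_deriv (by ring)
  have h2 : HasDerivAt (fun s : ℝ => s ^ α) (α * t ^ (α - 1)) t :=
    Real.hasDerivAt_rpow_const (Or.inl ht.ne')
  have h3 := (h1.mul h2).mul (hp t)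
  refine h3.congr_deriv ?_
  have hX : t ^ α = t ^ (α - 1) * t := by
    rw [← Real.rpow_add_one ht.ne' (α - 1)]
    norm_num
  simp only [Pi.mul_apply]
  rw [hX]; ring

private lemma key2 (α : ℝ) {t : ℝ} (ht : 0 < t) (p p' p'' : ℝ → ℝ)
    (hp : ∀ s, HasDerivAt p (p' s) s) (hp' : ∀ s, HasDerivAt p' (p'' s) s) :
    deriv (deriv (fun s => Real.exp (-s) * s ^ α * p s)) t =
      Real.exp (-t) * t ^ (α - 1 - 1) *
        ((α - 1 - t) * ((α - t) * p t + t * p' t) +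
          t * (-(p t) + (α - t) * p' t + p' t + t * p'' t)) := by
  have hev : deriv (fun s => Real.exp (-s) * s ^ α * p s)
      =ᶠ[nhds t] fun s => Real.exp (-s) * s ^ (α - 1) * ((α - s) * p s + s * p' s) := by
    filter_upwards [Ioi_mem_nhds ht] with s hs
    exact (key α hs p p' hp).deriv
  rw [hev.deriv_eq]
  have hq : ∀ s : ℝ, HasDerivAt (fun x => (α - x) * p x + x * p' x)
      (-(p s) + (α - s) * p' s + p' s + s * p'' s) s := by
    intro s
    have h := (((hasDerivAt_id s).const_sub α).mul (hp s)).add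
      ((hasDerivAt_id s).mul (hp' s))
    refine h.congr_deriv ?_
    simp only [id_eq]
    ring
  exact (key (α - 1) ht _ _ hq).deriv

private lemma D5 (α c0 c1 c2 c3 c4 c5 : ℝ) {t : ℝ} (ht : 0 < t) :
    deriv (fun s => Real.exp (-s) * s ^ α *
        (c0 + c1*s + c2*s^2 + c3*s^3 + c4*s^4 + c5*s^5)) t =
      Real.exp (-t) * t ^ (α - 1) *
        ((α - t) * (c0 + c1*t + c2*t^2 + c3*t^3 + c4*t^4 + c5*t^5) +
          t * (c1 + 2*c2*t + 3*c3*t^2 + 4*c4*t^3 + 5*c5*t^4)) :=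
  (key α ht _ _ (fun s => P5 c0 c1 c2 c3 c4 c5 s)).deriv

private lemma DD5 (α c0 c1 c2 c3 c4 c5 : ℝ) {t : ℝ} (ht : 0 < t) :
    deriv (deriv (fun s => Real.exp (-s) * s ^ α *
        (c0 + c1*s + c2*s^2 + c3*s^3 + c4*s^4 + c5*s^5))) t =
      Real.exp (-t) * t ^ (α - 1 - 1) *
        ((α - 1 - t) * ((α - t) * (c0 + c1*t + c2*t^2 + c3*t^3 + c4*t^4 + c5*t^5) +
            t * (c1 + 2*c2*t + 3*c3*t^2 + 4*c4*t^3 + 5*c5*t^4)) +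
          t * (-(c0 + c1*t + c2*t^2 + c3*t^3 + c4*t^4 + c5*t^5) +
            (α - t) * (c1 + 2*c2*t + 3*c3*t^2 + 4*c4*t^3 + 5*c5*t^4) +
            (c1 + 2*c2*t + 3*c3*t^2 + 4*c4*t^3 + 5*c5*t^4) +
            t * (2*c2 + 2*(3*c3)*t + 3*(4*c4)*t^2 + 4*(5*c5)*t^3))) :=
  key2 α ht _ _ _ (fun s => P5 c0 c1 c2 c3 c4 c5 s)
    (fun s => P4 c1 (2*c2) (3*c3) (4*c4) (5*c5) s)

/-- the symmetry equations for the second Laguerre family hold on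
`(0, ∞)` (derivatives entrywise). -/
theorem second_family_symmetry_equations (α b : ℝ)
    (hα : -1 < α) (hb : 0 < |b|) (hb1 : |b| < 1)
    (W F₁ F₂ : ℝ → Matrix (Fin 2) (Fin 2) ℝ) (F₀ : Matrix (Fin 2) (Fin 2) ℝ)
    (hW : ∀ t : ℝ, W t = Real.exp (-t) • (t ^ α) •
      !![t ^ 4 + 4 * b ^ 2 * (α + 2) * t ^ 2 * (α + 2 - t), -b * t * (t - 2 * (α + 2));
         -b * t * (t - 2 * (α + 2)), 1])
    (hF₂ : ∀ t : ℝ, F₂ t = t • (1 : Matrix (Fin 2) (Fin 2) ℝ))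
    (hF₁ : ∀ t : ℝ, F₁ t = !![α + 5 - t, 0; -4 * b * (α + 2) * t, α + 1 - t])
    (hF₀ : F₀ = !![-2, 0; 2 * b * (α + 2) * (α + 1), 0]) :
    ∀ t ∈ Set.Ioi (0 : ℝ),
      (∀ i j : Fin 2,
        2 * deriv (fun s => (W s * F₂ s) i j) t = (W t * F₁ t + (F₁ t)ᵀ * W t) i j) ∧
      (∀ i j : Fin 2,
        deriv (deriv (fun s => (W s * F₂ s) i j)) t =
          deriv (fun s => (W s * F₁ s) i j) t - (W t * F₀) i j + (F₀ᵀ * W t) i j) := by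
  intro t ht
  have ht' : (0:ℝ) < t := ht
  have hX0 : t ^ α = t ^ (α - 1) * t := by
    rw [← Real.rpow_add_one ht'.ne' (α - 1)]; norm_num
  have hX1 : t ^ (α - 1) = t ^ (α - 1 - 1) * t := by
    rw [← Real.rpow_add_one ht'.ne' (α - 1 - 1)]; norm_num
  have hF₁T : (F₁ t)ᵀ = !![α + 5 - t, -4*b*(α+2)*t; 0, α+1-t] := by
    rw [hF₁]; ext i j; fin_cases i <;> fin_cases j <;> rfl
  have hF₀T : F₀ᵀ = !![-2, 2*b*(α+2)*(α+1); 0, 0] := by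
    rw [hF₀]; ext i j; fin_cases i <;> fin_cases j <;> rfl
  have hP00 : (fun s => (W s * F₂ s) 0 0) = fun s => Real.exp (-s) * s ^ α *
      (0 + 0*s + 0*s^2 + (4*b^2*(α+2)^2)*s^3 + (-(4*b^2*(α+2)))*s^4 + 1*s^5) := by
    funext s
    rw [hW, hF₂]
    simp [Matrix.mul_apply, Fin.sum_univ_two]
    try ring
    try tauto
  have hP01 : (fun s => (W s * F₂ s) 0 1) = fun s => Real.exp (-s) * s ^ α *
      (0 + 0*s + (2*b*(α+2))*s^2 + (-b)*s^3 + 0*s^4 + 0*s^5) := by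
    funext s
    rw [hW, hF₂]
    simp [Matrix.mul_apply, Fin.sum_univ_two]
    try ring
    try tauto
  have hP10 : (fun s => (W s * F₂ s) 1 0) = fun s => Real.exp (-s) * s ^ α *
      (0 + 0*s + (2*b*(α+2))*s^2 + (-b)*s^3 + 0*s^4 + 0*s^5) := by
    funext s
    rw [hW, hF₂]
    simp [Matrix.mul_apply, Fin.sum_univ_two]
    try ring
    try tauto
  have hP11 : (fun s => (W s * F₂ s) 1 1) = fun s => Real.exp (-s) * s ^ α *
      (0 + 1*s + 0*s^2 + 0*s^3 + 0*s^4 + 0*s^5) := by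
    funext s
    rw [hW, hF₂]
    simp [Matrix.mul_apply, Fin.sum_univ_two]
    try ring
    try tauto
  have hR00 : (fun s => (W s * F₁ s) 0 0) = fun s => Real.exp (-s) * s ^ α *
      (0 + 0*s + (4*b^2*(α+2)^2*(α+3))*s^2 + (-(8*b^2*(α+2)*(α+3)))*s^3 + (α+5+4*b^2*(α+2))*s^4 + (-1)*s^5) := by
    funext s
    rw [hW, hF₁]
    simp [Matrix.mul_apply, Fin.sum_univ_two]
    try ring
    try tauto
  have hR01 : (fun s => (W s * F₁ s) 0 1) = fun s => Real.exp (-s) * s ^ α *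
      (0 + (2*b*(α+2)*(α+1))*s + (-(b*(α+1)) - 2*b*(α+2))*s^2 + b*s^3 + 0*s^4 + 0*s^5) := by
    funext s
    rw [hW, hF₁]
    simp [Matrix.mul_apply, Fin.sum_univ_two]
    try ring
    try tauto
  have hR10 : (fun s => (W s * F₁ s) 1 0) = fun s => Real.exp (-s) * s ^ α *
      (0 + (2*b*(α+2)*(α+3))*s + (-(b*(α+5)) - 2*b*(α+2))*s^2 + b*s^3 + 0*s^4 + 0*s^5) := by
    funext s
    rw [hW, hF₁]
    simp [Matrix.mul_apply, Fin.sum_univ_two]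
    try ring
    try tauto
  have hR11 : (fun s => (W s * F₁ s) 1 1) = fun s => Real.exp (-s) * s ^ α *
      ((α+1) + (-1)*s + 0*s^2 + 0*s^3 + 0*s^4 + 0*s^5) := by
    funext s
    rw [hW, hF₁]
    simp [Matrix.mul_apply, Fin.sum_univ_two]
    try ring
    try tauto
  constructor
  · simp only [Fin.forall_fin_two]
    refine ⟨⟨?_, ?_⟩, ?_, ?_⟩
    · rw [hP00, D5 α 0 0 0 (4*b^2*(α+2)^2) (-(4*b^2*(α+2))) 1 ht', hW, hF₁T, hF₁, hX0]
      simp [Matrix.mul_apply, Fin.sum_univ_two]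
      try ring
      try tauto
    · rw [hP01, D5 α 0 0 (2*b*(α+2)) (-b) 0 0 ht', hW, hF₁T, hF₁, hX0]
      simp [Matrix.mul_apply, Fin.sum_univ_two]
      try ring
      try tauto
    · rw [hP10, D5 α 0 0 (2*b*(α+2)) (-b) 0 0 ht', hW, hF₁T, hF₁, hX0]
      simp [Matrix.mul_apply, Fin.sum_univ_two]
      try ring
      try tauto
    · rw [hP11, D5 α 0 1 0 0 0 0 ht', hW, hF₁T, hF₁, hX0]
      simp [Matrix.mul_apply, Fin.sum_univ_two]
      try ring
      try tauto
  · simp only [Fin.forall_fin_two]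
    refine ⟨⟨?_, ?_⟩, ?_, ?_⟩
    · rw [hP00, hR00, DD5 α 0 0 0 (4*b^2*(α+2)^2) (-(4*b^2*(α+2))) 1 ht', D5 α 0 0 (4*b^2*(α+2)^2*(α+3)) (-(8*b^2*(α+2)*(α+3))) (α+5+4*b^2*(α+2)) (-1) ht',
        hW, hF₀T, hF₀, hX0, hX1]
      simp [Matrix.mul_apply, Fin.sum_univ_two]
      try ring
      try tauto
    · rw [hP01, hR01, DD5 α 0 0 (2*b*(α+2)) (-b) 0 0 ht', D5 α 0 (2*b*(α+2)*(α+1)) (-(b*(α+1)) - 2*b*(α+2)) b 0 0 ht',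
        hW, hF₀T, hF₀, hX0, hX1]
      simp [Matrix.mul_apply, Fin.sum_univ_two]
      try ring
      try tauto
    · rw [hP10, hR10, DD5 α 0 0 (2*b*(α+2)) (-b) 0 0 ht', D5 α 0 (2*b*(α+2)*(α+3)) (-(b*(α+5)) - 2*b*(α+2)) b 0 0 ht',
        hW, hF₀T, hF₀, hX0, hX1]
      simp [Matrix.mul_apply, Fin.sum_univ_two]
      try ring
      try tauto
    · rw [hP11, hR11, DD5 α 0 1 0 0 0 0 ht', D5 α (α+1) (-1) 0 0 0 0 ht',
        hW, hF₀T, hF₀, hX0, hX1]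
      simp [Matrix.mul_apply, Fin.sum_univ_two]
      try ring
      try tauto
end

section
/- For β > 0, the matrix W(t) = e^{−t} t^{−1/2} [[(4t/β)(e^{√(βt)}+e^{−√(βt)}), (2√t/√β)(e^{√(βt)}−e^{−√(βt)})],[(2√t/√β)(e^{√(βt)}−e^{−√(βt)}), e^{√(βt)}+e^{−√(βt)}]] is symmetric positive definite for all t ∈ (0,∞), and all its entries multiplied by any power t^n are integrable on (0,∞). -/
open Matrix

lemma aux_int (s : ℝ) (hs : -1 < s) :
    MeasureTheory.IntegrableOn (fun t : ℝ => t ^ s * Real.exp (-(1/2) * t)) (Set.Ioi 0) := by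
  have := integrableOn_rpow_mul_exp_neg_mul_rpow (p := 1) hs one_pos (by norm_num : (0:ℝ) < 1/2)
  simpa [Real.rpow_one] using this

set_option maxHeartbeats 1000000 in
/-- the weight of the third (new) Laguerre family is symmetric
positive definite on `(0, ∞)` and has finite moments of all orders. -/
theorem third_family_weight_posdef_integrable (β : ℝ) (hβ : 0 < β)
    (W : ℝ → Matrix (Fin 2) (Fin 2) ℝ)
    (hW : ∀ t : ℝ, W t = Real.exp (-t) • (t ^ (-(1:ℝ)/2)) •
      !![(4 * t / β) * (Real.exp (Real.sqrt (β * t)) + Real.exp (-Real.sqrt (β * t))),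
         (2 * Real.sqrt t / Real.sqrt β) *
           (Real.exp (Real.sqrt (β * t)) - Real.exp (-Real.sqrt (β * t)));
         (2 * Real.sqrt t / Real.sqrt β) *
           (Real.exp (Real.sqrt (β * t)) - Real.exp (-Real.sqrt (β * t))),
         Real.exp (Real.sqrt (β * t)) + Real.exp (-Real.sqrt (β * t))]) :
    (∀ t ∈ Set.Ioi (0 : ℝ), (W t)ᵀ = W t ∧ 0 < W t 1 1 ∧ 0 < (W t).det) ∧
    (∀ (n : ℕ) (i j : Fin 2),
      MeasureTheory.IntegrableOn (fun t : ℝ => t ^ n * |W t i j|) (Set.Ioi 0)) := by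
  have hsb : Real.sqrt β > 0 := Real.sqrt_pos.mpr hβ
  -- entry formulas
  have h00 : ∀ t : ℝ, W t 0 0 = Real.exp (-t) * (t ^ (-(1:ℝ)/2) *
      ((4 * t / β) * (Real.exp (Real.sqrt (β * t)) + Real.exp (-Real.sqrt (β * t))))) := by
    intro t; rw [hW]; rfl
  have h01 : ∀ t : ℝ, W t 0 1 = Real.exp (-t) * (t ^ (-(1:ℝ)/2) *
      ((2 * Real.sqrt t / Real.sqrt β) *
        (Real.exp (Real.sqrt (β * t)) - Real.exp (-Real.sqrt (β * t))))) := by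
    intro t; rw [hW]; rfl
  have h10 : ∀ t : ℝ, W t 1 0 = Real.exp (-t) * (t ^ (-(1:ℝ)/2) *
      ((2 * Real.sqrt t / Real.sqrt β) *
        (Real.exp (Real.sqrt (β * t)) - Real.exp (-Real.sqrt (β * t))))) := by
    intro t; rw [hW]; rfl
  have h11 : ∀ t : ℝ, W t 1 1 = Real.exp (-t) * (t ^ (-(1:ℝ)/2) *
      (Real.exp (Real.sqrt (β * t)) + Real.exp (-Real.sqrt (β * t)))) := by
    intro t; rw [hW]; rfl
  constructor
  · intro t ht
    rw [Set.mem_Ioi] at ht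
    have hE : 0 < Real.exp (-t) := Real.exp_pos _
    have hP : 0 < t ^ (-(1:ℝ)/2) := Real.rpow_pos_of_pos ht _
    have huv : Real.exp (Real.sqrt (β * t)) * Real.exp (-Real.sqrt (β * t)) = 1 := by
      rw [← Real.exp_add]; simp
    have hu : 0 < Real.exp (Real.sqrt (β * t)) := Real.exp_pos _
    have hv : 0 < Real.exp (-Real.sqrt (β * t)) := Real.exp_pos _
    have hst : Real.sqrt t ^ 2 = t := Real.sq_sqrt ht.le
    have hsb2 : Real.sqrt β ^ 2 = β := Real.sq_sqrt hβ.le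
    refine ⟨?_, ?_, ?_⟩
    · ext i j
      fin_cases i <;> fin_cases j <;>
        simp only [transpose_apply, Fin.zero_eta, Fin.mk_one] <;>
        first
        | rfl
        | rw [h01, h10]
    · rw [h11]; positivity
    · have hb2 : (2 * Real.sqrt t / Real.sqrt β) ^ 2 = 4 * t / β := by
        rw [div_pow, mul_pow, hst, hsb2]; norm_num
      have hdet : (W t).det = Real.exp (-t) ^ 2 * (t ^ (-(1:ℝ)/2)) ^ 2 * (4 * t / β) *
          (4 * (Real.exp (Real.sqrt (β * t)) * Real.exp (-Real.sqrt (β * t)))) := by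
        rw [Matrix.det_fin_two, h00, h01, h10, h11]
        linear_combination (-(Real.exp (-t) ^ 2 * (t ^ (-(1:ℝ)/2)) ^ 2 *
          (Real.exp (Real.sqrt (β * t)) - Real.exp (-Real.sqrt (β * t))) ^ 2)) * hb2
      rw [hdet, huv]
      positivity
  · intro n i j
    set C : ℝ := (8/β + 2/Real.sqrt β + 2) * Real.exp (β/2) with hC
    have hC0 : 0 < 8/β + 2/Real.sqrt β + 2 := by positivity
    have hCpos : 0 < C := by positivity
    have hint : MeasureTheory.IntegrableOn
        (fun t : ℝ => C * (t ^ ((n:ℝ) - 1/2) * Real.exp (-(1/2) * t)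
          + t ^ ((n:ℝ) + 1/2) * Real.exp (-(1/2) * t))) (Set.Ioi 0) := by
      refine MeasureTheory.Integrable.const_mul ?_ _
      exact (aux_int _ (by push_cast; linarith [Nat.cast_nonneg (α := ℝ) n])).add
        (aux_int _ (by push_cast; linarith [Nat.cast_nonneg (α := ℝ) n]))
    refine MeasureTheory.Integrable.mono' hint ?_ ?_
    · apply MeasureTheory.AEStronglyMeasurable.mul
      · exact (measurable_id.pow_const n).aestronglyMeasurable
      · apply (Measurable.abs ?_).aestronglyMeasurable
        fin_cases i <;> fin_cases j
        · simp only [Fin.zero_eta]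
          rw [show (fun t : ℝ => W t 0 0) = fun t : ℝ => Real.exp (-t) * (t ^ (-(1:ℝ)/2) *
            ((4 * t / β) * (Real.exp (Real.sqrt (β * t)) + Real.exp (-Real.sqrt (β * t)))))
            from funext h00]
          fun_prop
        · simp only [Fin.zero_eta, Fin.mk_one]
          rw [show (fun t : ℝ => W t 0 1) = fun t : ℝ => Real.exp (-t) * (t ^ (-(1:ℝ)/2) *
            ((2 * Real.sqrt t / Real.sqrt β) *
              (Real.exp (Real.sqrt (β * t)) - Real.exp (-Real.sqrt (β * t)))))
            from funext h01]
          fun_prop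
        · simp only [Fin.zero_eta, Fin.mk_one]
          rw [show (fun t : ℝ => W t 1 0) = fun t : ℝ => Real.exp (-t) * (t ^ (-(1:ℝ)/2) *
            ((2 * Real.sqrt t / Real.sqrt β) *
              (Real.exp (Real.sqrt (β * t)) - Real.exp (-Real.sqrt (β * t)))))
            from funext h10]
          fun_prop
        · simp only [Fin.mk_one]
          rw [show (fun t : ℝ => W t 1 1) = fun t : ℝ => Real.exp (-t) * (t ^ (-(1:ℝ)/2) *
            (Real.exp (Real.sqrt (β * t)) + Real.exp (-Real.sqrt (β * t))))
            from funext h11]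
          fun_prop
    · rw [MeasureTheory.ae_restrict_iff' measurableSet_Ioi]
      filter_upwards with t htIoi
      have ht : 0 < t := htIoi
      have hu : 0 < Real.exp (Real.sqrt (β * t)) := Real.exp_pos _
      have hv : 0 < Real.exp (-Real.sqrt (β * t)) := Real.exp_pos _
      have hvu : Real.exp (-Real.sqrt (β * t)) ≤ Real.exp (Real.sqrt (β * t)) :=
        Real.exp_le_exp.mpr (by linarith [Real.sqrt_nonneg (β * t)])
      have hv1 : Real.exp (-Real.sqrt (β * t)) ≤ 1 :=
        Real.exp_le_one_iff.mpr (neg_nonpos.mpr (Real.sqrt_nonneg _))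
      have hu1 : 1 ≤ Real.exp (Real.sqrt (β * t)) :=
        Real.one_le_exp (Real.sqrt_nonneg _)
      have hP : 0 < t ^ (-(1:ℝ)/2) := Real.rpow_pos_of_pos ht _
      have hE : 0 < Real.exp (-t) := Real.exp_pos _
      have hstle : Real.sqrt t ≤ 1 + t := by
        nlinarith [Real.sq_sqrt ht.le, Real.sqrt_nonneg t, sq_nonneg (Real.sqrt t - 1)]
      -- entry bound
      have hoff : |(2 * Real.sqrt t / Real.sqrt β) *
          (Real.exp (Real.sqrt (β * t)) - Real.exp (-Real.sqrt (β * t)))| ≤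
          (8/β + 2/Real.sqrt β + 2) * (1 + t) * Real.exp (Real.sqrt (β * t)) := by
        rw [abs_of_nonneg (mul_nonneg (by positivity) (by linarith))]
        have step : 2 * Real.sqrt t / Real.sqrt β *
            (Real.exp (Real.sqrt (β * t)) - Real.exp (-Real.sqrt (β * t))) ≤
            2 / Real.sqrt β * ((1 + t) * Real.exp (Real.sqrt (β * t))) := by
          rw [div_mul_eq_mul_div, div_mul_eq_mul_div, div_le_div_iff₀ hsb hsb]
          have : Real.sqrt t * (Real.exp (Real.sqrt (β * t)) - Real.exp (-Real.sqrt (β * t)))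
              ≤ (1 + t) * Real.exp (Real.sqrt (β * t)) := by
            have := mul_le_mul hstle (by linarith : Real.exp (Real.sqrt (β * t)) -
              Real.exp (-Real.sqrt (β * t)) ≤ Real.exp (Real.sqrt (β * t)))
              (by linarith) (by linarith)
            linarith
          nlinarith [Real.sqrt_nonneg t]
        have rest : 2 / Real.sqrt β * ((1 + t) * Real.exp (Real.sqrt (β * t))) ≤
            (8/β + 2/Real.sqrt β + 2) * (1 + t) * Real.exp (Real.sqrt (β * t)) := by
          have h1 : (0:ℝ) < (1 + t) * Real.exp (Real.sqrt (β * t)) := by positivity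
          have h2 : (0:ℝ) ≤ 8/β + 2 := by positivity
          nlinarith
        linarith
      have hentry : |W t i j| ≤ Real.exp (-t) * t ^ (-(1:ℝ)/2) *
          ((8/β + 2/Real.sqrt β + 2) * (1 + t) * Real.exp (Real.sqrt (β * t))):= by
        have key : ∀ x : ℝ, |x| ≤ (8/β + 2/Real.sqrt β + 2) * (1 + t) *
            Real.exp (Real.sqrt (β * t)) →
            |Real.exp (-t) * (t ^ (-(1:ℝ)/2) * x)| ≤ Real.exp (-t) * t ^ (-(1:ℝ)/2) *
            ((8/β + 2/Real.sqrt β + 2) * (1 + t) * Real.exp (Real.sqrt (β * t))) := by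
          intro x hx
          rw [abs_mul, abs_mul, Real.abs_exp, abs_of_pos hP, mul_assoc]
          exact mul_le_mul_of_nonneg_left (mul_le_mul_of_nonneg_left hx hP.le) hE.le
        fin_cases i <;> fin_cases j <;> simp only [Fin.zero_eta, Fin.mk_one]
        · rw [h00]
          apply key
          rw [abs_of_nonneg (by positivity)]
          have h1 : Real.exp (Real.sqrt (β * t)) + Real.exp (-Real.sqrt (β * t)) ≤
              2 * Real.exp (Real.sqrt (β * t)) := by linarith
          have h2 : 4 * t / β * (Real.exp (Real.sqrt (β * t)) + Real.exp (-Real.sqrt (β * t)))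
              ≤ 4 * t / β * (2 * Real.exp (Real.sqrt (β * t))) :=
            mul_le_mul_of_nonneg_left h1 (by positivity)
          have h3 : 4 * t / β * (2 * Real.exp (Real.sqrt (β * t))) ≤
              8 / β * ((1 + t) * Real.exp (Real.sqrt (β * t))) := by
            rw [div_mul_eq_mul_div, div_mul_eq_mul_div, div_le_div_iff₀ hβ hβ]
            nlinarith [mul_pos (mul_pos (by norm_num : (0:ℝ) < 8) hu) hβ]
          have h4 : 8 / β * ((1 + t) * Real.exp (Real.sqrt (β * t))) ≤
              (8/β + 2/Real.sqrt β + 2) * (1 + t) * Real.exp (Real.sqrt (β * t)) := by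
            have hpt : (0:ℝ) < (1 + t) * Real.exp (Real.sqrt (β * t)) := by positivity
            have : (0:ℝ) ≤ 2/Real.sqrt β + 2 := by positivity
            nlinarith
          linarith
        · rw [h01]; exact key _ hoff
        · rw [h10]; exact key _ hoff
        · rw [h11]
          apply key
          rw [abs_of_nonneg (by positivity)]
          have h1 : Real.exp (Real.sqrt (β * t)) + Real.exp (-Real.sqrt (β * t)) ≤
              2 * ((1 + t) * Real.exp (Real.sqrt (β * t))) := by
            nlinarith [mul_nonneg ht.le hu.le]
          have h2 : 2 * ((1 + t) * Real.exp (Real.sqrt (β * t))) ≤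
              (8/β + 2/Real.sqrt β + 2) * ((1 + t) * Real.exp (Real.sqrt (β * t))) := by
            have ha : (0:ℝ) < 8/β := by positivity
            have hb2 : (0:ℝ) < 2/Real.sqrt β := by positivity
            exact mul_le_mul_of_nonneg_right (by linarith) (by positivity)
          have h3 : (8/β + 2/Real.sqrt β + 2) * ((1 + t) * Real.exp (Real.sqrt (β * t))) =
              (8/β + 2/Real.sqrt β + 2) * (1 + t) * Real.exp (Real.sqrt (β * t)) := by ring
          linarith
      -- exponent bound
      have hsqrt : Real.sqrt (β * t) ≤ β/2 + t/2 := by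
        have h1 : Real.sqrt (β * t) ≤ Real.sqrt ((β/2 + t/2)^2) :=
          Real.sqrt_le_sqrt (by nlinarith [sq_nonneg (β - t)])
        rwa [Real.sqrt_sq (by positivity)] at h1
      have hexp : Real.exp (-t) * Real.exp (Real.sqrt (β * t)) ≤
          Real.exp (β/2) * Real.exp (-(1/2) * t) := by
        rw [← Real.exp_add, ← Real.exp_add]
        exact Real.exp_le_exp.mpr (by linarith)
      -- assemble
      have hnorm : ‖t ^ n * |W t i j|‖ = t ^ n * |W t i j| := by
        rw [Real.norm_eq_abs, abs_of_nonneg (by positivity)]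
      rw [hnorm]
      have hpowsplit : (t:ℝ) ^ n * (t ^ (-(1:ℝ)/2)) = t ^ ((n:ℝ) - 1/2) := by
        rw [← Real.rpow_natCast t n, ← Real.rpow_add ht]
        congr 1; ring
      have hpowsplit2 : (t:ℝ) ^ n * (t ^ (-(1:ℝ)/2)) * t = t ^ ((n:ℝ) + 1/2) := by
        rw [hpowsplit]
        nth_rewrite 2 [← Real.rpow_one t]
        rw [← Real.rpow_add ht]
        congr 1; ring
      calc t ^ n * |W t i j|
          ≤ t ^ n * (Real.exp (-t) * t ^ (-(1:ℝ)/2) *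
            ((8/β + 2/Real.sqrt β + 2) * (1 + t) * Real.exp (Real.sqrt (β * t)))) := by
            apply mul_le_mul_of_nonneg_left hentry (by positivity)
        _ = (8/β + 2/Real.sqrt β + 2) * (t ^ n * t ^ (-(1:ℝ)/2) * (1 + t)) *
            (Real.exp (-t) * Real.exp (Real.sqrt (β * t))) := by ring
        _ ≤ (8/β + 2/Real.sqrt β + 2) * (t ^ n * t ^ (-(1:ℝ)/2) * (1 + t)) *
            (Real.exp (β/2) * Real.exp (-(1/2) * t)) := by
            apply mul_le_mul_of_nonneg_left hexp (by positivity)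
        _ = C * (t ^ ((n:ℝ) - 1/2) * Real.exp (-(1/2) * t)
            + t ^ ((n:ℝ) + 1/2) * Real.exp (-(1/2) * t)) := by
            rw [← hpowsplit, ← hpowsplit2, hC]; ring
end

section
/- For u > 0, c₂₂ > 0, c₂₁ ∈ ℝ, the integral ∫₀^∞ e^{−tu} t^{u(c₂₁ − 1/(u−v))} [k₂ + (k₁(u−v)/(2uv))(c₂₁ u t^{v/(u−v)} − v t^{u/(u−v)})] dt, with v = 2u and parameters such that all exponents exceed −1, equals zero if and only if k₂ = −c₂₁ k₁ (u−v)² u^{u/(v−u)} Γ(c₂₁u) / (2v Γ(c₂₁u − v/(u−v))). -/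
open MeasureTheory Set

lemma gammaAuxInt {u a : ℝ} (hu : 0 < u) (ha : 0 < a) :
    IntegrableOn (fun t : ℝ => t ^ (a - 1) * Real.exp (-(u * t))) (Set.Ioi 0) := by
  have h0 : IntegrableOn (fun x : ℝ => Real.exp (-x) * x ^ (a - 1)) (Set.Ioi 0) :=
    Real.GammaIntegral_convergent ha
  have h1 : IntegrableOn (fun t : ℝ => Real.exp (-(u * t)) * (u * t) ^ (a - 1))
      (Set.Ioi 0) := by
    have := (integrableOn_Ioi_comp_mul_left_iff
      (fun x : ℝ => Real.exp (-x) * x ^ (a - 1)) 0 hu).2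
    simpa using this (by simpa using h0)
  have h2 := h1.const_mul (u ^ (a - 1))⁻¹
  refine IntegrableOn.congr_fun h2 (fun t ht => ?_) measurableSet_Ioi
  have ht' : (0 : ℝ) < t := ht
  have hup : (0:ℝ) < u ^ (a-1) := Real.rpow_pos_of_pos hu _
  rw [Real.mul_rpow hu.le ht'.le]
  field_simp


/-- the off-diagonal moment vanishing condition in the case
`v = 2u`: the integral of `w₁₂` over `(0,∞)` vanishes iff `k₂` has the stated
value in terms of Gamma functions. -/
theorem offdiagonal_moment_vanishes_iff (u v c₂₁ c₂₂ k₁ k₂ : ℝ)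
    (hu : 0 < u) (hc₂₂ : 0 < c₂₂) (hv : v = 2 * u)
    (hgamma : v / (u - v) < c₂₁ * u)
    (he₀ : -1 < u * (c₂₁ - 1 / (u - v)))
    (he₁ : -1 < u * (c₂₁ - 1 / (u - v)) + v / (u - v))
    (he₂ : -1 < u * (c₂₁ - 1 / (u - v)) + u / (u - v)) :
    (∫ t in Set.Ioi (0 : ℝ),
        Real.exp (-(t * u)) * t ^ (u * (c₂₁ - 1 / (u - v))) *
          (k₂ + (k₁ * (u - v) / (2 * u * v)) *
            (c₂₁ * u * t ^ (v / (u - v)) - v * t ^ (u / (u - v))))) = 0 ↔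
      k₂ = -(c₂₁ * k₁ * (u - v) ^ 2 * u ^ (u / (v - u)) * Real.Gamma (c₂₁ * u)) /
            (2 * v * Real.Gamma (c₂₁ * u - v / (u - v))) := by
  subst hv
  have hu' : u ≠ 0 := hu.ne'
  set c : ℝ := c₂₁ * u with hcdef
  have hmu : u - 2 * u = -u := by ring
  have hvv : (2 * u) / (u - 2 * u) = -2 := by
    rw [hmu, div_neg, mul_div_assoc, div_self hu']; norm_num
  have huu : u / (u - 2 * u) = -1 := by rw [hmu, div_neg, div_self hu']
  have hvu : u / (2 * u - u) = 1 := by rw [show 2*u - u = u by ring, div_self hu']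
  have he : u * (c₂₁ - 1 / (u - 2 * u)) = c + 1 := by
    rw [hmu, div_neg, sub_neg_eq_add, mul_add, mul_one_div_cancel hu', hcdef]; ring_nf
  have hc : 0 < c := by rw [he, hvv] at he₁; linarith
  -- rewrite the integrand
  have hcong : ∀ t ∈ Set.Ioi (0:ℝ),
      Real.exp (-(t * u)) * t ^ (u * (c₂₁ - 1 / (u - 2 * u))) *
          (k₂ + (k₁ * (u - 2 * u) / (2 * u * (2 * u))) *
            (c₂₁ * u * t ^ ((2 * u) / (u - 2 * u)) - 2 * u * t ^ (u / (u - 2 * u))))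
        = k₂ * (t ^ ((c + 2) - 1) * Real.exp (-(u * t)))
          + (-(k₁ * c₂₁ / 4)) * (t ^ (c - 1) * Real.exp (-(u * t)))
          + (k₁ / 2) * (t ^ ((c + 1) - 1) * Real.exp (-(u * t))) := by
    intro t ht
    have ht' : (0:ℝ) < t := ht
    rw [he, hvv, huu]
    have e1 : ((c + 2) - 1 : ℝ) = (c + 1) := by ring
    have e2 : t ^ (c - 1 : ℝ) = t ^ (c + 1 : ℝ) * t ^ (-2 : ℝ) := by
      rw [← Real.rpow_add ht']; ring_nf
    have e3 : t ^ ((c + 1) - 1 : ℝ) = t ^ (c + 1 : ℝ) * t ^ (-1 : ℝ) := by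
      rw [← Real.rpow_add ht']; ring_nf
    rw [e1, e2, e3, mul_comm t u, hcdef]
    have htn : t ≠ 0 := ht'.ne'
    have h2 : t ^ (-2:ℝ) = (t^(2:ℕ))⁻¹ := by
      rw [← Real.rpow_natCast t 2, ← Real.rpow_neg ht'.le]; norm_num
    have h1 : t ^ (-1:ℝ) = t⁻¹ := by
      rw [← Real.rpow_neg_one t]
    rw [h1, h2]
    field_simp
    ring
  rw [MeasureTheory.setIntegral_congr_fun measurableSet_Ioi hcong]
  have hc2 : (0:ℝ) < c + 2 := by linarith
  have hc1 : (0:ℝ) < c + 1 := by linarith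
  have i0 := gammaAuxInt hu hc2
  have i1 := gammaAuxInt hu hc
  have i2 := gammaAuxInt hu hc1
  have iA : IntegrableOn (fun x : ℝ => k₂ * (x ^ ((c + 2) - 1) * Real.exp (-(u * x)))) (Set.Ioi 0) :=
    i0.const_mul k₂
  have iB : IntegrableOn (fun x : ℝ => -(k₁ * c₂₁ / 4) * (x ^ (c - 1) * Real.exp (-(u * x)))) (Set.Ioi 0) :=
    i1.const_mul _
  have iC : IntegrableOn (fun x : ℝ => k₁ / 2 * (x ^ ((c + 1) - 1) * Real.exp (-(u * x)))) (Set.Ioi 0) :=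
    i2.const_mul _
  have iAB : IntegrableOn (fun x : ℝ => k₂ * (x ^ ((c + 2) - 1) * Real.exp (-(u * x)))
      + -(k₁ * c₂₁ / 4) * (x ^ (c - 1) * Real.exp (-(u * x)))) (Set.Ioi 0) := iA.add iB
  rw [MeasureTheory.integral_add iAB iC,
    MeasureTheory.integral_add iA iB,
    MeasureTheory.integral_const_mul, MeasureTheory.integral_const_mul,
    MeasureTheory.integral_const_mul,
    Real.integral_rpow_mul_exp_neg_mul_Ioi hc2 hu,
    Real.integral_rpow_mul_exp_neg_mul_Ioi hc hu,
    Real.integral_rpow_mul_exp_neg_mul_Ioi hc1 hu]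
  -- now an algebraic identity
  have hG1 : Real.Gamma (c + 1) = c * Real.Gamma c := Real.Gamma_add_one hc.ne'
  have hG2 : Real.Gamma (c + 2) = (c + 1) * (c * Real.Gamma c) := by
    rw [show (c + 2 : ℝ) = (c + 1) + 1 by ring, Real.Gamma_add_one hc1.ne', hG1]
  have hGpos : 0 < Real.Gamma c := Real.Gamma_pos_of_pos hc
  have hrw : c - (2 * u) / (u - 2 * u) = c + 2 := by rw [hvv]; ring
  rw [hrw, hvu, Real.rpow_one, hG1, hG2]
  have hp : (0:ℝ) < (1/u) ^ c := Real.rpow_pos_of_pos (by positivity) _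
  have hpc2 : ((1/u):ℝ) ^ (c+2) = (1/u)^c * (1/u)^(2:ℝ) := by
    rw [← Real.rpow_add (by positivity)]
  have hpc1 : ((1/u):ℝ) ^ (c+1) = (1/u)^c * (1/u)^(1:ℝ) := by
    rw [← Real.rpow_add (by positivity)]
  have h2r : ((1/u):ℝ) ^ (2:ℝ) = 1/(u*u) := by
    rw [show ((2:ℝ)) = ((2:ℕ):ℝ) by norm_num, Real.rpow_natCast]
    field_simp
  rw [hpc2, hpc1, Real.rpow_one, h2r]
  have hD : (0:ℝ) < (1/u)^c * Real.Gamma c := mul_pos hp hGpos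
  have hcu : c / u = c₂₁ := by rw [hcdef, mul_div_assoc, div_self hu', mul_one]
  have lhs_eq : k₂ * ((1/u)^c * (1/(u*u)) * ((c+1)*(c*Real.Gamma c)))
      + -(k₁ * c₂₁ / 4) * ((1/u)^c * Real.Gamma c)
      + k₁ / 2 * ((1/u)^c * (1/u) * (c * Real.Gamma c))
      = ((1/u)^c * Real.Gamma c) * (k₂ * ((c+1)*c) / (u*u) + k₁ * c₂₁ / 4) := by
    rw [← hcu, hcdef]
    field_simp
    ring
  have h4c : (0:ℝ) < 4 * ((c+1)*c) := by nlinarith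
  have hrhs : -(c₂₁ * k₁ * (u - 2*u)^2 * u * Real.Gamma c) /
        (2 * (2*u) * ((c+1) * (c * Real.Gamma c)))
      = -(k₁ * c₂₁ * u * u) / (4 * ((c+1)*c)) := by
    rw [show (u - 2*u)^2 = u^2 by ring]
    rw [div_eq_div_iff (by positivity) h4c.ne']
    · field_simp
      ring
  rw [lhs_eq, hrhs, mul_eq_zero, or_iff_right hD.ne']
  constructor
  · intro h
    have h4 : k₂ * ((c+1)*c) / (u*u) = -(k₁*c₂₁/4) := by linarith
    have h5 : k₂ * ((c+1)*c) = -(k₁*c₂₁/4) * (u*u) :=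
      (div_eq_iff (mul_ne_zero hu' hu')).mp h4
    rw [eq_div_iff h4c.ne']
    linear_combination 4 * h5
  · intro h
    rw [h]
    field_simp
    ring
end

section
/- Let u > 0, c₂₂ > 0, c₂₁ ∈ ℝ with c₂₂ > 2c₂₁u/(c₂₂ − c₂₁u) and c₂₂ ≠ c₂₁u, and γ > 0. Then W(t) = e^{−tu} t^{c₂₂−1} [[γ t^{2c₂₁u/(c₂₁u − c₂₂)} + ((c₂₂−c₂₁u)(c₂₂−tu)/(2uc₂₂))², (c₂₂−c₂₁u)(c₂₂−tu)/(2uc₂₂)],[(c₂₂−c₂₁u)(c₂₂−tu)/(2uc₂₂), 1]] is positive definite for all t ∈ (0,∞) and integrable on (0,∞) (all entries, all moments). -/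
open MeasureTheory Set Real

private lemma aux_int_vequ (u p : ℝ) (hu : 0 < u) (hp : -1 < p) :
    IntegrableOn (fun t : ℝ => t ^ p * Real.exp (-(t * u))) (Set.Ioi 0) := by
  have h := integrableOn_rpow_mul_exp_neg_mul_rpow hp zero_lt_one hu
  refine h.congr_fun (fun x hx => ?_) measurableSet_Ioi
  simp only [Real.rpow_one]
  ring_nf

set_option maxHeartbeats 1000000 in
/-- the weight from the case `|v| = |u|` is positive definite on
`(0, ∞)` and all its entries have finite moments of all orders. -/
theorem vequ_weight_posdef_integrable (u c₂₁ c₂₂ γ : ℝ)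
    (hu : 0 < u) (hc₂₂ : 0 < c₂₂) (hγ : 0 < γ)
    (hne : c₂₂ ≠ c₂₁ * u) (hineq : 2 * c₂₁ * u / (c₂₂ - c₂₁ * u) < c₂₂)
    (W : ℝ → Matrix (Fin 2) (Fin 2) ℝ)
    (hW : ∀ t : ℝ, W t = Real.exp (-(t * u)) • (t ^ (c₂₂ - 1)) •
      !![γ * t ^ (2 * c₂₁ * u / (c₂₁ * u - c₂₂)) +
           ((c₂₂ - c₂₁ * u) * (c₂₂ - t * u) / (2 * u * c₂₂)) ^ 2,
         (c₂₂ - c₂₁ * u) * (c₂₂ - t * u) / (2 * u * c₂₂);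
         (c₂₂ - c₂₁ * u) * (c₂₂ - t * u) / (2 * u * c₂₂), 1]) :
    (∀ t ∈ Set.Ioi (0 : ℝ), 0 < W t 1 1 ∧ 0 < (W t).det) ∧
    (∀ (n : ℕ) (i j : Fin 2),
      MeasureTheory.IntegrableOn (fun t : ℝ => t ^ n * |W t i j|) (Set.Ioi 0)) := by
  set β : ℝ := 2 * c₂₁ * u / (c₂₁ * u - c₂₂) with hβdef
  set f : ℝ → ℝ := fun t => (c₂₂ - c₂₁ * u) * (c₂₂ - t * u) / (2 * u * c₂₂) with hfdef
  have hβ : -c₂₂ < β := by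
    have : β = -(2 * c₂₁ * u / (c₂₂ - c₂₁ * u)) := by
      rw [hβdef, ← neg_sub c₂₂ (c₂₁ * u), div_neg]
    linarith
  -- entry formulas
  have e00 : ∀ t : ℝ, W t 0 0 =
      Real.exp (-(t * u)) * (t ^ (c₂₂ - 1) * (γ * t ^ β + (f t) ^ 2)) := by
    intro t; rw [hW t]; simp [Matrix.smul_apply]; exact Or.inl rfl
  have e01 : ∀ t : ℝ, W t 0 1 = Real.exp (-(t * u)) * (t ^ (c₂₂ - 1) * f t) := by
    intro t; rw [hW t]; simp [Matrix.smul_apply]; exact Or.inl rfl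
  have e10 : ∀ t : ℝ, W t 1 0 = Real.exp (-(t * u)) * (t ^ (c₂₂ - 1) * f t) := by
    intro t; rw [hW t]; simp [Matrix.smul_apply]; exact Or.inl rfl
  have e11 : ∀ t : ℝ, W t 1 1 = Real.exp (-(t * u)) * (t ^ (c₂₂ - 1) * 1) := by
    intro t; rw [hW t]; simp [Matrix.smul_apply]
  constructor
  · intro t ht
    rw [Set.mem_Ioi] at ht
    have hE : 0 < Real.exp (-(t * u)) := Real.exp_pos _
    have hr : 0 < t ^ (c₂₂ - 1) := Real.rpow_pos_of_pos ht _
    have hb : 0 < t ^ β := Real.rpow_pos_of_pos ht _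
    constructor
    · rw [e11 t]; positivity
    · rw [Matrix.det_fin_two, e00 t, e01 t, e10 t, e11 t]
      have : Real.exp (-(t * u)) * (t ^ (c₂₂ - 1) * (γ * t ^ β + (f t) ^ 2)) *
            (Real.exp (-(t * u)) * (t ^ (c₂₂ - 1) * 1)) -
          Real.exp (-(t * u)) * (t ^ (c₂₂ - 1) * f t) *
            (Real.exp (-(t * u)) * (t ^ (c₂₂ - 1) * f t)) =
          (Real.exp (-(t * u)) * t ^ (c₂₂ - 1)) ^ 2 * (γ * t ^ β) := by ring
      rw [this]
      positivity
  · intro n i j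
    -- constants for the linear bound on |f|
    set K : ℝ := |(c₂₂ - c₂₁ * u) / (2 * u * c₂₂)| with hKdef
    have hK : 0 ≤ K := abs_nonneg _
    set k0 : ℝ := K * c₂₂ with hk0def
    set k1 : ℝ := K * u with hk1def
    have hk0 : 0 ≤ k0 := by positivity
    have hk1 : 0 ≤ k1 := by positivity
    have hfb : ∀ t : ℝ, 0 < t → |f t| ≤ k0 + k1 * t := by
      intro t ht
      have h1 : f t = ((c₂₂ - c₂₁ * u) / (2 * u * c₂₂)) * (c₂₂ - t * u) := by
        rw [hfdef]; ring
      rw [h1, abs_mul]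
      have h2 : |c₂₂ - t * u| ≤ c₂₂ + t * u := by
        rw [abs_le]; constructor <;> nlinarith
      calc K * |c₂₂ - t * u| ≤ K * (c₂₂ + t * u) := by
            exact mul_le_mul_of_nonneg_left h2 hK
        _ = k0 + k1 * t := by rw [hk0def, hk1def]; ring
    -- the dominating function
    set a0 : ℝ := (n : ℝ) + (c₂₂ - 1) + β with ha0def
    set a1 : ℝ := (n : ℝ) + (c₂₂ - 1) with ha1def
    set a2 : ℝ := (n : ℝ) + (c₂₂ - 1) + 1 with ha2def
    set a3 : ℝ := (n : ℝ) + (c₂₂ - 1) + 1 + 1 with ha3def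
    have hn0 : (0 : ℝ) ≤ (n : ℝ) := Nat.cast_nonneg n
    have ha0 : -1 < a0 := by rw [ha0def]; linarith
    have ha1 : -1 < a1 := by rw [ha1def]; linarith
    have ha2 : -1 < a2 := by rw [ha2def]; linarith
    have ha3 : -1 < a3 := by rw [ha3def]; linarith
    set C1 : ℝ := k0 ^ 2 + k0 + 1 with hC1def
    set C2 : ℝ := 2 * k0 * k1 + k1 with hC2def
    set C3 : ℝ := k1 ^ 2 with hC3def
    set G : ℝ → ℝ := fun t =>
      γ * (t ^ a0 * Real.exp (-(t * u))) + C1 * (t ^ a1 * Real.exp (-(t * u))) +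
      C2 * (t ^ a2 * Real.exp (-(t * u))) + C3 * (t ^ a3 * Real.exp (-(t * u)))
      with hGdef
    have hG : IntegrableOn G (Set.Ioi 0) := by
      exact ((((aux_int_vequ u a0 hu ha0).const_mul γ).add
        ((aux_int_vequ u a1 hu ha1).const_mul C1)).add
        ((aux_int_vequ u a2 hu ha2).const_mul C2)).add
        ((aux_int_vequ u a3 hu ha3).const_mul C3)
    -- measurability
    have hmeas : AEStronglyMeasurable (fun t : ℝ => t ^ n * |W t i j|)
        (volume.restrict (Set.Ioi 0)) := by
      have hWm : Measurable (fun t : ℝ => W t i j) := by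
        rcases (show i = 0 ∨ i = 1 from by omega) with rfl | rfl <;>
          rcases (show j = 0 ∨ j = 1 from by omega) with rfl | rfl
        · simp only [e00, hfdef]; fun_prop
        · simp only [e01, hfdef]; fun_prop
        · simp only [e10, hfdef]; fun_prop
        · simp only [e11, hfdef]; fun_prop
      exact ((measurable_id.pow_const n).mul hWm.abs).aestronglyMeasurable
    -- the pointwise bound
    refine Integrable.mono' hG hmeas ?_
    rw [ae_restrict_iff' measurableSet_Ioi]
    filter_upwards with t ht
    rw [Set.mem_Ioi] at ht
    have hE : 0 < Real.exp (-(t * u)) := Real.exp_pos _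
    have hr : 0 < t ^ (c₂₂ - 1) := Real.rpow_pos_of_pos ht _
    have hb : 0 < t ^ β := Real.rpow_pos_of_pos ht _
    have htn : 0 ≤ t ^ n := pow_nonneg ht.le n
    have hnorm : ‖t ^ n * |W t i j|‖ = t ^ n * |W t i j| := by
      rw [Real.norm_eq_abs, abs_of_nonneg (by positivity)]
    rw [hnorm]
    -- entrywise bound on |W t i j|
    have hentry : |W t i j| ≤
        Real.exp (-(t * u)) * (t ^ (c₂₂ - 1) *
          (γ * t ^ β + (k0 + k1 * t) ^ 2 + (k0 + k1 * t) + 1)) := by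
      have hfb' := hfb t ht
      have hf2 : (f t) ^ 2 ≤ (k0 + k1 * t) ^ 2 := by
        have := abs_nonneg (f t)
        nlinarith [sq_abs (f t)]
      have hlin : 0 ≤ k0 + k1 * t := by positivity
      have hgb : 0 ≤ γ * t ^ β := by positivity
      have hsq : 0 ≤ (k0 + k1 * t) ^ 2 := sq_nonneg _
      rcases (show i = 0 ∨ i = 1 from by omega) with rfl | rfl <;>
        rcases (show j = 0 ∨ j = 1 from by omega) with rfl | rfl
      · rw [e00 t, abs_mul, abs_of_pos hE, abs_mul, abs_of_pos hr]
        gcongr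
        rw [abs_of_nonneg (by positivity)]
        linarith
      · rw [e01 t, abs_mul, abs_of_pos hE, abs_mul, abs_of_pos hr]
        gcongr
        linarith
      · rw [e10 t, abs_mul, abs_of_pos hE, abs_mul, abs_of_pos hr]
        gcongr
        linarith
      · rw [e11 t, abs_mul, abs_of_pos hE, abs_mul, abs_of_pos hr, abs_one]
        gcongr
        linarith
    -- rpow identities
    have id0 : t ^ a0 = t ^ n * t ^ (c₂₂ - 1) * t ^ β := by
      rw [ha0def, Real.rpow_add ht, Real.rpow_add ht, Real.rpow_natCast]
    have id1 : t ^ a1 = t ^ n * t ^ (c₂₂ - 1) := by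
      rw [ha1def, Real.rpow_add ht, Real.rpow_natCast]
    have id2 : t ^ a2 = t ^ n * t ^ (c₂₂ - 1) * t := by
      rw [ha2def, Real.rpow_add ht, Real.rpow_add ht, Real.rpow_natCast, Real.rpow_one]
    have id3 : t ^ a3 = t ^ n * t ^ (c₂₂ - 1) * t * t := by
      rw [ha3def, Real.rpow_add ht, Real.rpow_add ht, Real.rpow_add ht,
        Real.rpow_natCast, Real.rpow_one]
    calc t ^ n * |W t i j| ≤ t ^ n *
          (Real.exp (-(t * u)) * (t ^ (c₂₂ - 1) *
            (γ * t ^ β + (k0 + k1 * t) ^ 2 + (k0 + k1 * t) + 1))) :=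
        mul_le_mul_of_nonneg_left hentry htn
      _ = G t := by
        rw [hGdef]; simp only []
        rw [id0, id1, id2, id3, hC1def, hC2def, hC3def]
        ring
end

section
/- Let u > 0, c₂₂ > 0, c₂₁ ∈ ℝ, γ > 0, with c₂₂ ≠ c₂₁u and c₂₂ > 2c₂₁u/(c₂₂−c₂₁u). If V₀ is a 2×2 complex matrix such that W(t)V₀ = V₀* W(t) for all t ∈ (0,∞), where W is the weight W(t) = e^{−tu} t^{c₂₂−1} [[γ t^{2c₂₁u/(c₂₁u−c₂₂)} + ((c₂₂−c₂₁u)(c₂₂−tu)/(2uc₂₂))², (c₂₂−c₂₁u)(c₂₂−tu)/(2uc₂₂)],[(c₂₂−c₂₁u)(c₂₂−tu)/(2uc₂₂), 1]], then V₀ is scalar. -/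
open Matrix

/-- irreducibility of the weight from the case `|v| = |u|`: any
complex matrix `V₀` with `W(t) V₀ = V₀* W(t)` for all `t > 0` is scalar. -/
theorem vequ_weight_irreducible (u c₂₁ c₂₂ γ : ℝ)
    (hu : 0 < u) (hc₂₂ : 0 < c₂₂) (hγ : 0 < γ) (hc₂₁ : c₂₁ ≠ 0)
    (hne : c₂₂ ≠ c₂₁ * u) (hineq : 2 * c₂₁ * u / (c₂₂ - c₂₁ * u) < c₂₂)
    (W : ℝ → Matrix (Fin 2) (Fin 2) ℂ)
    (hW : ∀ t : ℝ, W t =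
      !![((Real.exp (-(t * u)) * t ^ (c₂₂ - 1) *
            (γ * t ^ (2 * c₂₁ * u / (c₂₁ * u - c₂₂)) +
              ((c₂₂ - c₂₁ * u) * (c₂₂ - t * u) / (2 * u * c₂₂)) ^ 2) : ℝ) : ℂ),
         ((Real.exp (-(t * u)) * t ^ (c₂₂ - 1) *
            ((c₂₂ - c₂₁ * u) * (c₂₂ - t * u) / (2 * u * c₂₂)) : ℝ) : ℂ);
         ((Real.exp (-(t * u)) * t ^ (c₂₂ - 1) *
            ((c₂₂ - c₂₁ * u) * (c₂₂ - t * u) / (2 * u * c₂₂)) : ℝ) : ℂ),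
         ((Real.exp (-(t * u)) * t ^ (c₂₂ - 1) : ℝ) : ℂ)])
    (V₀ : Matrix (Fin 2) (Fin 2) ℂ)
    (hV : ∀ t ∈ Set.Ioi (0 : ℝ), W t * V₀ = V₀ᴴ * W t) :
    ∃ c : ℂ, V₀ = c • (1 : Matrix (Fin 2) (Fin 2) ℂ) := by
  have hu0 : u ≠ 0 := ne_of_gt hu
  have hc0 : c₂₂ ≠ 0 := ne_of_gt hc₂₂
  set α : ℝ := 2 * c₂₁ * u / (c₂₁ * u - c₂₂) with hαdef
  -- entry (1,0) equation, with the positive scalar cancelled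
  have hE : ∀ t : ℝ, 0 < t →
      (((c₂₂ - c₂₁ * u) * (c₂₂ - t * u) / (2 * u * c₂₂) : ℝ) : ℂ) * V₀ 0 0 + V₀ 1 0
        = (starRingEnd ℂ) (V₀ 0 1) *
            ((γ * t ^ α +
              ((c₂₂ - c₂₁ * u) * (c₂₂ - t * u) / (2 * u * c₂₂)) ^ 2 : ℝ) : ℂ)
          + (starRingEnd ℂ) (V₀ 1 1) *
            (((c₂₂ - c₂₁ * u) * (c₂₂ - t * u) / (2 * u * c₂₂) : ℝ) : ℂ) := by
    intro t ht
    have h := congrFun (congrFun (hV t ht) 1) 0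
    rw [hW t] at h
    simp [Matrix.mul_apply, Fin.sum_univ_two, Matrix.conjTranspose_apply] at h
    have hs : ((Real.exp (-(t * u)) * t ^ (c₂₂ - 1) : ℝ) : ℂ) ≠ 0 := by
      rw [Complex.ofReal_ne_zero]; positivity
    refine mul_left_cancel₀ hs ?_
    push_cast at h ⊢
    linear_combination h
  -- entry (1,1) equation
  have hE11 : ∀ t : ℝ, 0 < t →
      (((c₂₂ - c₂₁ * u) * (c₂₂ - t * u) / (2 * u * c₂₂) : ℝ) : ℂ) * V₀ 0 1 + V₀ 1 1
        = (starRingEnd ℂ) (V₀ 0 1) *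
            (((c₂₂ - c₂₁ * u) * (c₂₂ - t * u) / (2 * u * c₂₂)) : ℝ)
          + (starRingEnd ℂ) (V₀ 1 1) := by
    intro t ht
    have h := congrFun (congrFun (hV t ht) 1) 1
    rw [hW t] at h
    simp [Matrix.mul_apply, Fin.sum_univ_two, Matrix.conjTranspose_apply] at h
    have hs : ((Real.exp (-(t * u)) * t ^ (c₂₂ - 1) : ℝ) : ℂ) ≠ 0 := by
      rw [Complex.ofReal_ne_zero]; positivity
    refine mul_left_cancel₀ hs ?_
    push_cast at h ⊢
    linear_combination h
  set r : ℝ := (2 : ℝ) ^ α with hrdef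
  have hv1 : (1 : ℝ) ^ α = 1 := Real.one_rpow α
  have hv4 : (4 : ℝ) ^ α = r ^ 2 := by
    rw [show (4:ℝ) = 2 * 2 by norm_num, Real.mul_rpow (by norm_num) (by norm_num)]; ring
  have hv8 : (8 : ℝ) ^ α = r ^ 3 := by
    rw [show (8:ℝ) = 2 * 4 by norm_num, Real.mul_rpow (by norm_num) (by norm_num), hv4]; ring
  have E0 := hE 1 one_pos
  have E1 := hE 2 two_pos
  have E2 := hE 4 (by norm_num)
  have E3 := hE 8 (by norm_num)
  rw [hv1] at E0
  rw [hv4] at E2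
  rw [hv8] at E3
  rw [← hrdef] at E1
  push_cast at E0 E1 E2 E3
  -- the Vandermonde eliminations
  have hD : (starRingEnd ℂ) (V₀ 0 1) * (γ : ℂ) *
      (((r:ℂ) - 1) * ((r:ℂ) - 2) * ((r:ℂ) - 4)) = 0 := by
    linear_combination (8 : ℂ) * E0 - 14 * E1 + 7 * E2 - E3
  have Hc : (starRingEnd ℂ) (V₀ 0 1) *
      (6 * (((c₂₂:ℂ) - (c₂₁:ℂ) * u) * u / (2 * u * c₂₂)) ^ 2 +
        (γ : ℂ) * ((r:ℂ) ^ 2 - 3 * (r:ℂ) + 2)) = 0 := by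
    linear_combination (-2 : ℂ) * E0 + 3 * E1 - E2
  have hK : (((c₂₂:ℂ) - (c₂₁:ℂ) * u) * u / (2 * u * c₂₂)) ≠ 0 := by
    apply div_ne_zero
    · exact mul_ne_zero (sub_ne_zero.mpr (by exact_mod_cast hne)) (by exact_mod_cast hu0)
    · exact mul_ne_zero (mul_ne_zero two_ne_zero (by exact_mod_cast hu0)) (by exact_mod_cast hc0)
  -- conclude the off-diagonal entry vanishes
  have hb : (starRingEnd ℂ) (V₀ 0 1) = 0 := by
    have hK6 : (6 : ℂ) * (((c₂₂:ℂ) - (c₂₁:ℂ) * u) * u / (2 * u * c₂₂)) ^ 2 ≠ 0 :=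
      mul_ne_zero (by norm_num) (pow_ne_zero 2 hK)
    rcases eq_or_ne r 1 with hr | hr1
    · have h' : (starRingEnd ℂ) (V₀ 0 1) *
          (6 * (((c₂₂:ℂ) - (c₂₁:ℂ) * u) * u / (2 * u * c₂₂)) ^ 2) = 0 := by
        rw [hr] at Hc; push_cast at Hc; linear_combination Hc
      exact (mul_eq_zero.mp h').resolve_right hK6
    rcases eq_or_ne r 2 with hr | hr2
    · have h' : (starRingEnd ℂ) (V₀ 0 1) *
          (6 * (((c₂₂:ℂ) - (c₂₁:ℂ) * u) * u / (2 * u * c₂₂)) ^ 2) = 0 := by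
        rw [hr] at Hc; push_cast at Hc; linear_combination Hc
      exact (mul_eq_zero.mp h').resolve_right hK6
    rcases eq_or_ne r 4 with hr | hr4
    · have h' : (starRingEnd ℂ) (V₀ 0 1) *
          (6 * (((c₂₂:ℂ) - (c₂₁:ℂ) * u) * u / (2 * u * c₂₂)) ^ 2 + 6 * (γ:ℂ)) = 0 := by
        rw [hr] at Hc; push_cast at Hc; linear_combination Hc
      have hpos : (0:ℝ) < 6 * ((c₂₂ - c₂₁ * u) * u / (2 * u * c₂₂)) ^ 2 + 6 * γ := by
        positivity
      have h6 : (6 : ℂ) * (((c₂₂:ℂ) - (c₂₁:ℂ) * u) * u / (2 * u * c₂₂)) ^ 2 + 6 * (γ:ℂ) ≠ 0 := by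
        have := Complex.ofReal_ne_zero.mpr (ne_of_gt hpos)
        push_cast at this
        exact this
      exact (mul_eq_zero.mp h').resolve_right h6
    · have h1 : ((r:ℂ) - 1) ≠ 0 := sub_ne_zero.mpr (by exact_mod_cast hr1)
      have h2 : ((r:ℂ) - 2) ≠ 0 := sub_ne_zero.mpr (by exact_mod_cast hr2)
      have h4 : ((r:ℂ) - 4) ≠ 0 := sub_ne_zero.mpr (by exact_mod_cast hr4)
      have hγ0 : (γ : ℂ) ≠ 0 := by exact_mod_cast ne_of_gt hγ
      have := mul_ne_zero (mul_ne_zero h1 h2) h4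
      rcases mul_eq_zero.mp hD with h | h
      · exact (mul_eq_zero.mp h).resolve_right hγ0
      · exact absurd h this
  have hb0 : V₀ 0 1 = 0 := by
    have := congrArg (starRingEnd ℂ) hb
    simpa using this
  rw [hb] at E0 E1
  -- diagonal entries are conjugate
  have had : V₀ 0 0 = (starRingEnd ℂ) (V₀ 1 1) := by
    have key : (((c₂₂:ℂ) - (c₂₁:ℂ) * u) * u / (2 * u * c₂₂)) *
        (V₀ 0 0 - (starRingEnd ℂ) (V₀ 1 1)) = 0 := by
      linear_combination E0 - E1
    rcases mul_eq_zero.mp key with h | h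
    · exact absurd h hK
    · exact sub_eq_zero.mp h
  -- lower-left entry vanishes
  have hc10 : V₀ 1 0 = 0 := by
    rw [had] at E0
    linear_combination E0
  -- the (1,1) entry is real
  have hd : V₀ 1 1 = (starRingEnd ℂ) (V₀ 1 1) := by
    have h := hE11 1 one_pos
    rw [hb0] at h
    simpa using h
  have hdd : V₀ 1 1 = V₀ 0 0 := by rw [had, ← hd]
  refine ⟨V₀ 0 0, ?_⟩
  ext i j
  fin_cases i <;> fin_cases j <;>
    simp [Matrix.smul_apply, Matrix.one_apply, hb0, hc10, hdd]
end
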